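/- For all real x with 0 < x < π/2, one has f₁(x) > 0, where f₁(x) := ((−4π + 12)x + 3π² − 6π)·sin x − π(π − 2)·x·cos x + x·((4π − 12)x − 2π² + 4π). -/

import Mathlib

open Real

private lemma nonneg_of_deriv (f f' : ℝ → ℝ) (hf : ∀ t, HasDerivAt f (f' t) t)
    (h0 : f 0 = 0) (hd : ∀ t, 0 ≤ t → 0 ≤ f' t) : ∀ t, 0 ≤ t → 0 ≤ f t := by
  intro t ht
  have hmono : MonotoneOn f (Set.Ici 0) := by
    apply monotoneOn_of_deriv_nonneg (convex_Ici 0)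
    · exact (Differentiable.continuous fun x => (hf x).differentiableAt).continuousOn
    · intro x hx
      exact (hf x).differentiableAt.differentiableWithinAt
    · intro x hx
      rw [(hf x).deriv]
      exact hd x (le_of_lt (by simpa using hx))
  calc (0:ℝ) = f 0 := h0.symm
    _ ≤ f t := hmono Set.self_mem_Ici ht ht

private lemma sin_ge_t1 (t : ℝ) (ht : 0 ≤ t) : t - t ^ 3 / 6 ≤ sin t := by
  have := nonneg_of_deriv (fun t => sin t - (t - t ^ 3 / 6))
      (fun t => cos t - (1 - t ^ 2 / 2)) ?_ (by norm_num) ?_ t ht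
  · linarith
  · intro u
    have h1 := Real.hasDerivAt_sin u
    have h2 := hasDerivAt_id u
    have h3 := (hasDerivAt_pow 3 u).div_const 6
    convert h1.sub (h2.sub h3) using 1
    any_goals rfl
    norm_num; ring
  · intro u _
    nlinarith [Real.one_sub_sq_div_two_le_cos (x := u)]

private lemma cos_le_t2 (t : ℝ) (ht : 0 ≤ t) : cos t ≤ 1 - t ^ 2 / 2 + t ^ 4 / 24 := by
  have := nonneg_of_deriv (fun t => 1 - t ^ 2 / 2 + t ^ 4 / 24 - cos t)
      (fun t => sin t - (t - t ^ 3 / 6)) ?_ (by norm_num) ?_ t ht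
  · linarith
  · intro u
    have h1 := Real.hasDerivAt_cos u
    have h2 := (hasDerivAt_pow 2 u).div_const 2
    have h3 := (hasDerivAt_pow 4 u).div_const 24
    convert (((hasDerivAt_const u (1:ℝ)).sub h2).add h3).sub h1 using 1
    any_goals rfl
    norm_num; ring
  · intro u hu
    linarith [sin_ge_t1 u hu]

private lemma sin_le_t2 (t : ℝ) (ht : 0 ≤ t) : sin t ≤ t - t ^ 3 / 6 + t ^ 5 / 120 := by
  have := nonneg_of_deriv (fun t => t - t ^ 3 / 6 + t ^ 5 / 120 - sin t)
      (fun t => 1 - t ^ 2 / 2 + t ^ 4 / 24 - cos t) ?_ (by norm_num) ?_ t ht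
  · linarith
  · intro u
    have h1 := Real.hasDerivAt_sin u
    have h2 := hasDerivAt_id u
    have h3 := (hasDerivAt_pow 3 u).div_const 6
    have h4 := (hasDerivAt_pow 5 u).div_const 120
    convert ((h2.sub h3).add h4).sub h1 using 1
    any_goals rfl
    norm_num; ring
  · intro u hu
    linarith [cos_le_t2 u hu]

private lemma cos_ge_t3 (t : ℝ) (ht : 0 ≤ t) :
    1 - t ^ 2 / 2 + t ^ 4 / 24 - t ^ 6 / 720 ≤ cos t := by
  have := nonneg_of_deriv (fun t => cos t - (1 - t ^ 2 / 2 + t ^ 4 / 24 - t ^ 6 / 720))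
      (fun t => t - t ^ 3 / 6 + t ^ 5 / 120 - sin t) ?_ (by norm_num) ?_ t ht
  · linarith
  · intro u
    have h1 := Real.hasDerivAt_cos u
    have h2 := (hasDerivAt_pow 2 u).div_const 2
    have h3 := (hasDerivAt_pow 4 u).div_const 24
    have h4 := (hasDerivAt_pow 6 u).div_const 720
    convert h1.sub (((hasDerivAt_const u (1:ℝ)).sub h2).add h3 |>.sub h4) using 1
    any_goals rfl
    norm_num; ring
  · intro u hu
    linarith [sin_le_t2 u hu]

private lemma sin_ge_t3 (t : ℝ) (ht : 0 ≤ t) :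
    t - t ^ 3 / 6 + t ^ 5 / 120 - t ^ 7 / 5040 ≤ sin t := by
  have := nonneg_of_deriv
      (fun t => sin t - (t - t ^ 3 / 6 + t ^ 5 / 120 - t ^ 7 / 5040))
      (fun t => cos t - (1 - t ^ 2 / 2 + t ^ 4 / 24 - t ^ 6 / 720)) ?_ (by norm_num) ?_ t ht
  · linarith
  · intro u
    have h1 := Real.hasDerivAt_sin u
    have h2 := hasDerivAt_id u
    have h3 := (hasDerivAt_pow 3 u).div_const 6
    have h4 := (hasDerivAt_pow 5 u).div_const 120
    have h5 := (hasDerivAt_pow 7 u).div_const 5040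
    convert h1.sub (((h2.sub h3).add h4).sub h5) using 1
    any_goals rfl
    norm_num; ring
  · intro u hu
    linarith [cos_ge_t3 u hu]

set_option maxHeartbeats 1000000 in
theorem f1_pos (x : ℝ) (hx : 0 < x) (hx' : x < π / 2) :
    0 < ((-4 * π + 12) * x + 3 * π ^ 2 - 6 * π) * sin x - π * (π - 2) * x * cos x +
        x * ((4 * π - 12) * x - 2 * π ^ 2 + 4 * π) := by
  have hpi1 : (3.141592 : ℝ) < π := Real.pi_gt_d6
  have hpi2 : π < 3.141593 := Real.pi_lt_d6
  have hA : 0 < (-4 * π + 12) * x + 3 * π ^ 2 - 6 * π := by nlinarith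
  have hC : 0 < π * (π - 2) * x := by
    have h2 : (0:ℝ) < π - 2 := by linarith
    exact mul_pos (mul_pos Real.pi_pos h2) hx
  rcases le_or_gt x 1 with hx1 | hx1
  · -- region x ≤ 1 : Taylor bounds at 0
    have hs := sin_ge_t3 x hx.le
    have hc := cos_le_t2 x hx.le
    have h1 : ((-4 * π + 12) * x + 3 * π ^ 2 - 6 * π) * (x - x ^ 3 / 6 + x ^ 5 / 120 - x ^ 7 / 5040)
        ≤ ((-4 * π + 12) * x + 3 * π ^ 2 - 6 * π) * sin x :=
      mul_le_mul_of_nonneg_left hs hA.le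
    have h2 : π * (π - 2) * x * cos x ≤ π * (π - 2) * x * (1 - x ^ 2 / 2 + x ^ 4 / 24) :=
      mul_le_mul_of_nonneg_left hc hC.le
    have hQ : (0:ℝ) < -2 + (2/3)*π + (π/30 - π^2/60)*x + (1/10 - π/30)*x^2
        + (π/840 - π^2/1680)*x^3 + (-1/420 + π/1260)*x^4 := by
      nlinarith [mul_nonneg (by nlinarith : (0:ℝ) ≤ π^2/60 - π/30) (by linarith : (0:ℝ) ≤ 1 - x),
        mul_nonneg (by nlinarith : (0:ℝ) ≤ π/30 - 1/10)
          (by nlinarith [sq_nonneg (1-x)] : (0:ℝ) ≤ 1 - x^2),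
        mul_nonneg (by nlinarith : (0:ℝ) ≤ π^2/1680 - π/840)
          (by nlinarith [pow_le_one₀ hx.le hx1 (n:=3)] : (0:ℝ) ≤ 1 - x^3),
        mul_nonneg (by nlinarith : (0:ℝ) ≤ π/1260 - 1/420) (pow_nonneg hx.le 4)]
    have e : ((-4 * π + 12) * x + 3 * π ^ 2 - 6 * π) *
          (x - x ^ 3 / 6 + x ^ 5 / 120 - x ^ 7 / 5040)
        - π * (π - 2) * x * (1 - x ^ 2 / 2 + x ^ 4 / 24)
        + x * ((4 * π - 12) * x - 2 * π ^ 2 + 4 * π)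
        = x ^ 4 * (-2 + (2/3)*π + (π/30 - π^2/60)*x + (1/10 - π/30)*x^2
          + (π/840 - π^2/1680)*x^3 + (-1/420 + π/1260)*x^4) := by ring
    linarith [mul_pos (pow_pos hx 4) hQ, e, h1, h2]
  · -- region x ≥ 1 : Taylor bounds at π/2
    set y := π / 2 - x with hy
    have hy0 : 0 < y := by simp only [hy]; linarith
    have hy1 : y < 0.58 := by simp only [hy]; nlinarith
    have hsx : sin x = cos y := by
      rw [hy, Real.cos_pi_div_two_sub]
    have hcx : cos x = sin y := by
      rw [hy, Real.sin_pi_div_two_sub]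
    have hc := cos_ge_t3 y hy0.le
    have hs := sin_le_t2 y hy0.le
    rw [hsx, hcx]
    have h1 : ((-4 * π + 12) * x + 3 * π ^ 2 - 6 * π) *
          (1 - y ^ 2 / 2 + y ^ 4 / 24 - y ^ 6 / 720)
        ≤ ((-4 * π + 12) * x + 3 * π ^ 2 - 6 * π) * cos y :=
      mul_le_mul_of_nonneg_left hc hA.le
    have h2 : π * (π - 2) * x * sin y ≤ π * (π - 2) * x * (y - y ^ 3 / 6 + y ^ 5 / 120) :=
      mul_le_mul_of_nonneg_left hs hC.le
    have hxval : x = π / 2 - y := by rw [hy]; ring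
    have hR : (0:ℝ) < (-12+12*π-π^2-π^3/2) + (-12+2*π+π^2/2)*y + (6-2*π-π^2/6+π^3/12)*y^2
        + (π/3-π^2/8)*y^3 + (-1/2+π/6+π^2/120-π^3/240)*y^4
        + (-π/60+π^2/144)*y^5 + (1/60-π/180)*y^6 := by
      have hp2l : (9.8696002 : ℝ) < π^2 := by nlinarith
      have hp2u : π^2 < 9.8696066 := by nlinarith
      have hp3l : (31.0062573 : ℝ) < π^3 := by nlinarith
      have hp3u : π^3 < 31.006287 := by nlinarith
      nlinarith [sq_nonneg (y - 0.6), mul_pos hy0 hy0, mul_pos (mul_pos hy0 hy0) hy0,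
        mul_nonneg (mul_nonneg hy0.le hy0.le) (mul_nonneg hy0.le hy0.le),
        pow_nonneg hy0.le 5, pow_nonneg hy0.le 6,
        mul_nonneg (pow_nonneg hy0.le 2) (sq_nonneg (y - 0.6)),
        mul_nonneg (mul_nonneg hy0.le (by linarith : (0:ℝ) ≤ 0.58 - y)) (pow_nonneg hy0.le 2),
        mul_nonneg (mul_nonneg hy0.le (by linarith : (0:ℝ) ≤ 0.58 - y)) (pow_nonneg hy0.le 3),
        mul_nonneg (mul_nonneg hy0.le (by linarith : (0:ℝ) ≤ 0.58 - y)) (pow_nonneg hy0.le 4)]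
    have e : ((-4 * π + 12) * (π / 2 - y) + 3 * π ^ 2 - 6 * π) *
          (1 - y ^ 2 / 2 + y ^ 4 / 24 - y ^ 6 / 720)
        - π * (π - 2) * (π / 2 - y) * (y - y ^ 3 / 6 + y ^ 5 / 120)
        + (π / 2 - y) * ((4 * π - 12) * (π / 2 - y) - 2 * π ^ 2 + 4 * π)
        = y * ((-12+12*π-π^2-π^3/2) + (-12+2*π+π^2/2)*y + (6-2*π-π^2/6+π^3/12)*y^2
          + (π/3-π^2/8)*y^3 + (-1/2+π/6+π^2/120-π^3/240)*y^4
          + (-π/60+π^2/144)*y^5 + (1/60-π/180)*y^6) := by ring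
    rw [hxval] at h1 h2 ⊢
    linarith [mul_pos hy0 hR, e, h1, h2]
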